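/- A reflexive digraph H is transitive (i.e., (a,b) ∈ A(H) and (b,c) ∈ A(H) imply (a,c) ∈ A(H)) if and only if for every H-arc-coloured digraph D and every pair of distinct vertices x, y of D, every H-walk from x to y in D contains an H-path from x to y. -/

import Mathlib

/-- The list of colours along a list of vertices, given an arc-colouring `c`. -/
def colourList {α β : Type*} (c : β → β → α) : List β → List α
  | a :: b :: t => c a b :: colourList c (b :: t)
  | _ => []

/-- An `H`-walk in the `H`-arc-coloured digraph `(D, c)`: a directed walk with at least one
arc whose sequence of arc-colours is a directed walk in the pattern `H`. -/
def IsHWalk {α β : Type*} (H : α → α → Prop) (D : β → β → Prop) (c : β → β → α)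
    (l : List β) : Prop :=
  2 ≤ l.length ∧ l.Chain' D ∧ (colourList c l).Chain' H

/-- An `H`-path: an `H`-walk whose vertices are pairwise distinct. -/
def IsHPath {α β : Type*} (H : α → α → Prop) (D : β → β → Prop) (c : β → β → α)
    (l : List β) : Prop :=
  IsHWalk H D c l ∧ l.Nodup

/-- `u` reaches `v` by `H`-paths. -/
def HPathReach {α β : Type*} (H : α → α → Prop) (D : β → β → Prop) (c : β → β → α)
    (u v : β) : Prop :=
  ∃ l, IsHPath H D c l ∧ l.head? = some u ∧ l.getLast? = some v

/-- `u` reaches `v` by `H`-walks. -/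
def HWalkReach {α β : Type*} (H : α → α → Prop) (D : β → β → Prop) (c : β → β → α)
    (u v : β) : Prop :=
  ∃ l, IsHWalk H D c l ∧ l.head? = some u ∧ l.getLast? = some v

/-- A digraph (binary relation) is loopless. -/
def Loopless {β : Type*} (D : β → β → Prop) : Prop := ∀ v, ¬ D v v

/-- `S` is an independent set of the digraph `D` (no arc of `D` joins two of its vertices). -/
def Indep {β : Type*} (D : β → β → Prop) (S : Set β) : Prop :=
  ∀ u ∈ S, ∀ v ∈ S, ¬ D u v

/-- `S` is independent by `H`-paths. -/
def HIndep {α β : Type*} (H : α → α → Prop) (D : β → β → Prop) (c : β → β → α)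
    (S : Set β) : Prop :=
  ∀ u ∈ S, ∀ v ∈ S, u ≠ v → ¬ HPathReach H D c u v

/-- `S` is absorbent by `H`-paths. -/
def HAbsorbent {α β : Type*} (H : α → α → Prop) (D : β → β → Prop) (c : β → β → α)
    (S : Set β) : Prop :=
  ∀ u ∉ S, ∃ v ∈ S, HPathReach H D c u v

/-- An `H`-kernel: independent and absorbent by `H`-paths. -/
def HKernel {α β : Type*} (H : α → α → Prop) (D : β → β → Prop) (c : β → β → α)
    (S : Set β) : Prop :=
  HIndep H D c S ∧ HAbsorbent H D c S

/-- `S` is independent by `H`-walks. -/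
def WIndep {α β : Type*} (H : α → α → Prop) (D : β → β → Prop) (c : β → β → α)
    (S : Set β) : Prop :=
  ∀ u ∈ S, ∀ v ∈ S, u ≠ v → ¬ HWalkReach H D c u v

/-- `S` is absorbent by `H`-walks. -/
def WAbsorbent {α β : Type*} (H : α → α → Prop) (D : β → β → Prop) (c : β → β → α)
    (S : Set β) : Prop :=
  ∀ u ∉ S, ∃ v ∈ S, HWalkReach H D c u v

/-- A kernel by `H`-walks. -/
def WKernel {α β : Type*} (H : α → α → Prop) (D : β → β → Prop) (c : β → β → α)
    (S : Set β) : Prop :=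
  WIndep H D c S ∧ WAbsorbent H D c S

/-- The complement of a pattern: `(u,v)` (with `u ≠ v`) is an arc iff it is not an arc of `H`. -/
def complRel {α : Type*} (H : α → α → Prop) : α → α → Prop :=
  fun u v => u ≠ v ∧ ¬ H u v

/-- `G` contains a directed cycle of odd length. -/
def HasOddDicycle {α : Type*} (G : α → α → Prop) : Prop :=
  ∃ (x : α) (l : List α), (x :: l).Nodup ∧ Odd (x :: l).length ∧ (x :: l).Chain' G ∧
    G ((x :: l).getLast (List.cons_ne_nil x l)) x

/-- The list of arcs (consecutive pairs) of a list of vertices. -/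
def arcsOf {β : Type*} (l : List β) : List (β × β) := l.zip l.tail



section Aux

variable {α β : Type*}

lemma arcsOf_cons₂ (a b : β) (t : List β) :
    arcsOf (a :: b :: t) = (a, b) :: arcsOf (b :: t) := rfl

lemma colourList_eq_map (c : β → β → α) :
    ∀ l : List β, colourList c l = (arcsOf l).map (fun e => c e.1 e.2)
  | [] => rfl
  | [_] => rfl
  | a :: b :: t => by
    rw [colourList, arcsOf_cons₂, List.map_cons, colourList_eq_map c (b :: t)]

lemma chain'_iff_arcs (R : β → β → Prop) :
    ∀ l : List β, l.Chain' R ↔ ∀ e ∈ arcsOf l, R e.1 e.2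
  | [] => by simp [arcsOf, List.Chain']
  | [a] => by simp [arcsOf, List.Chain']
  | a :: b :: t => by
    rw [show List.Chain' R (a :: b :: t) ↔ R a b ∧ List.Chain' R (b :: t) from List.isChain_cons_cons, arcsOf_cons₂, chain'_iff_arcs R (b :: t)]
    simp

lemma arcsOf_append_cons (v : β) :
    ∀ (X Y : List β), arcsOf (X ++ v :: Y) = arcsOf (X ++ [v]) ++ arcsOf (v :: Y)
  | [], Y => by simp [arcsOf]
  | [x], Y => by simp [arcsOf_cons₂, arcsOf]
  | x :: x' :: X, Y => by
    have := arcsOf_append_cons v (x' :: X) Y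
    simp only [List.cons_append] at *
    rw [arcsOf_cons₂, arcsOf_cons₂, this]
    rfl

lemma exists_dup_decomp : ∀ (l : List β), ¬ l.Nodup →
    ∃ (A : List β) (v : β) (B C : List β), l = A ++ (v :: B) ++ (v :: C)
  | [], h => absurd List.nodup_nil h
  | a :: t, h => by
    by_cases ha : a ∈ t
    · obtain ⟨B, C, rfl⟩ := List.append_of_mem ha
      exact ⟨[], a, B, C, by simp⟩
    · have ht : ¬ t.Nodup := fun hn => h (hn.cons ha)
      obtain ⟨A, v, B, C, rfl⟩ := exists_dup_decomp t ht
      exact ⟨a :: A, v, B, C, by simp⟩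

lemma head?_eq_of_prefix (A : List β) (v : β) (X Y : List β) :
    (A ++ v :: X).head? = (A ++ v :: Y).head? := by
  cases A <;> rfl

lemma length_pos_of_head? {l : List β} {x : β} (h : l.head? = some x) : l ≠ [] := by
  cases l <;> simp_all

lemma eq_of_singleton_head_last {x y v : β}
    (h1 : [v].head? = some x) (h2 : [v].getLast? = some y) : x = y := by
  simp [List.getLast?] at h1 h2
  rw [← h1, ← h2]

lemma forward_aux {H : α → α → Prop} (hrefl : Reflexive H) (htrans : Transitive H)
    {β : Type*} (D : β → β → Prop) (c : β → β → α) (x y : β) (hxy : x ≠ y) :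
    ∀ (n : ℕ) (l : List β), l.length ≤ n → IsHWalk H D c l →
      l.head? = some x → l.getLast? = some y →
      ∃ p, IsHPath H D c p ∧ p.head? = some x ∧ p.getLast? = some y ∧
        ∀ e ∈ arcsOf p, e ∈ arcsOf l := by
  haveI : IsTrans α H := ⟨fun _ _ _ hab hbc => htrans hab hbc⟩
  intro n
  induction n with
  | zero =>
    intro l hl hw _ _
    rw [Nat.le_zero, List.length_eq_zero_iff] at hl
    subst hl
    exact absurd hw.1 (by simp)
  | succ n ih =>
    intro l hl hw hhead hlast
    by_cases hnd : l.Nodup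
    · exact ⟨l, ⟨hw, hnd⟩, hhead, hlast, fun e he => he⟩
    · obtain ⟨A, v, B, C, rfl⟩ := exists_dup_decomp l hnd
      set l' := A ++ v :: C with hl'
      have harcs : arcsOf (A ++ (v :: B) ++ (v :: C))
          = (arcsOf (A ++ [v]) ++ arcsOf (v :: (B ++ [v]))) ++ arcsOf (v :: C) := by
        rw [arcsOf_append_cons v (A ++ (v :: B)) C]
        congr 1
        have h2 : A ++ (v :: B) ++ [v] = A ++ v :: (B ++ [v]) := by simp
        rw [h2, arcsOf_append_cons v A (B ++ [v])]
      have harcs' : arcsOf l' = arcsOf (A ++ [v]) ++ arcsOf (v :: C) :=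
        arcsOf_append_cons v A C
      have hsub : (arcsOf l').Sublist (arcsOf (A ++ (v :: B) ++ (v :: C))) := by
        rw [harcs, harcs', List.append_assoc]
        refine List.Sublist.append_left ?_ _
        exact List.sublist_append_right _ _
      have hhead' : l'.head? = some x := by
        have : A ++ (v :: B) ++ (v :: C) = A ++ v :: (B ++ v :: C) := by simp
        rw [this] at hhead
        rw [hl', head?_eq_of_prefix A v C (B ++ v :: C)]
        exact hhead
      have hlast' : l'.getLast? = some y := by
        rw [hl', List.getLast?_append_cons A v C,
          ← List.getLast?_append_cons (A ++ (v :: B)) v C]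
        exact hlast
      have hne : l' ≠ [] := length_pos_of_head? hhead'
      have hlen2 : 2 ≤ l'.length := by
        rcases l'' : l' with _ | ⟨a, _ | ⟨b, t⟩⟩
        · exact absurd l'' hne
        · rw [l''] at hhead' hlast'
          exact absurd (eq_of_singleton_head_last hhead' hlast') hxy
        · simp
      have hD : l'.Chain' D := by
        rw [chain'_iff_arcs]
        intro e he
        exact (chain'_iff_arcs D _).1 hw.2.1 e (hsub.mem he)
      have hH : (colourList c l').Chain' H := by
        have hp : (colourList c (A ++ (v :: B) ++ (v :: C))).Pairwise H :=
          (List.isChain_iff_pairwise).1 hw.2.2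
        rw [colourList_eq_map] at hp ⊢
        exact (hp.sublist (hsub.map _)).isChain
      have hwalk' : IsHWalk H D c l' := ⟨hlen2, hD, hH⟩
      have hlen : l'.length ≤ n := by
        have h1 : (A ++ (v :: B) ++ (v :: C)).length ≤ n + 1 := hl
        simp only [hl', List.length_append, List.length_cons] at h1 ⊢
        omega
      obtain ⟨p, hp, h1, h2, h3⟩ := ih l' hlen hwalk' hhead' hlast'
      exact ⟨p, hp, h1, h2, fun e he => hsub.mem (h3 e he)⟩

end Aux

/-- A reflexive digraph `H` is transitive iff for every `H`-arc-coloured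
digraph `D` and distinct vertices `x, y`, every `H`-walk from `x` to `y` contains an
`H`-path from `x` to `y` (using only arcs of the walk). -/
theorem stmt8 {α : Type} (H : α → α → Prop) (hrefl : Reflexive H) :
    Transitive H ↔
      ∀ (β : Type) (D : β → β → Prop), Loopless D → ∀ c : β → β → α,
        ∀ x y : β, x ≠ y →
          ∀ l, IsHWalk H D c l → l.head? = some x → l.getLast? = some y →
            ∃ p, IsHPath H D c p ∧ p.head? = some x ∧ p.getLast? = some y ∧
              ∀ e ∈ arcsOf p, e ∈ arcsOf l := by
  constructor
  · intro htrans β D _hD c x y hxy l hw hh hl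
    exact forward_aux hrefl htrans D c x y hxy l.length l le_rfl hw hh hl
  · intro hprop a b cc hab hbc
    classical
    set D : Fin 4 → Fin 4 → Prop := fun u v =>
      (u = 0 ∧ v = 1) ∨ (u = 1 ∧ v = 2) ∨ (u = 2 ∧ v = 1) ∨ (u = 1 ∧ v = 3) with hD
    have hloop : Loopless D := by intro v; fin_cases v <;> simp [hD]
    set col : Fin 4 → Fin 4 → α := fun u v =>
      if u = 0 then a else if u = 2 then b else if v = 2 then b
      else if v = 3 then cc else a with hcol
    have hcol01 : col 0 1 = a := by simp [hcol]
    have hcol12 : col 1 2 = b := by simp [hcol]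
    have hcol21 : col 2 1 = b := by simp [hcol]
    have hcol13 : col 1 3 = cc := by simp [hcol]
    have hwalk : IsHWalk H D col [0, 1, 2, 1, 3] := by
      refine ⟨by simp, ?_, ?_⟩
      · simp only [List.Chain', List.isChain_cons_cons, List.isChain_singleton, hD]
        refine ⟨?_, ?_, ?_, ?_, trivial⟩ <;> simp
      · have hcl : colourList col [0, 1, 2, 1, 3] = [a, b, b, cc] := by
          simp [colourList, hcol01, hcol12, hcol21, hcol13]
        rw [hcl]
        exact List.isChain_cons_cons.2 ⟨hab, List.isChain_cons_cons.2 ⟨hrefl b,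
          List.isChain_cons_cons.2 ⟨hbc, List.isChain_singleton _⟩⟩⟩
    have harcs : arcsOf [(0 : Fin 4), 1, 2, 1, 3] = [(0, 1), (1, 2), (2, 1), (1, 3)] := rfl
    obtain ⟨p, ⟨⟨hplen, hpD, hpH⟩, hpnd⟩, hph, hpl, hparcs⟩ :=
      hprop (Fin 4) D hloop col 0 3 (by decide) [0, 1, 2, 1, 3] hwalk rfl rfl
    rw [harcs] at hparcs
    match p, hph, hpl, hpnd, hpH, hparcs with
    | [p0], hph, hpl, _, _, _ =>
      simp only [List.head?_cons, List.getLast?_singleton, Option.some.injEq] at hph hpl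
      subst hph; exact absurd hpl (by decide)
    | p0 :: p1 :: rest, hph, hpl, hpnd, hpH, hparcs =>
      simp only [List.head?_cons, Option.some.injEq] at hph
      subst hph
      have h01 : ((0 : Fin 4), p1) ∈ [((0 : Fin 4), 1), (1, 2), (2, 1), (1, 3)] :=
        hparcs _ (by rw [arcsOf_cons₂]; exact List.mem_cons_self)
      have hp1 : p1 = 1 := by fin_cases p1 <;> first | rfl | exact absurd h01 (by decide)
      subst hp1
      match rest, hpl, hpnd, hpH, hparcs with
      | [], hpl, _, _, _ => exact absurd hpl (by decide)
      | p2 :: rest2, hpl, hpnd, hpH, hparcs =>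
        have h12 : ((1 : Fin 4), p2) ∈ [((0 : Fin 4), 1), (1, 2), (2, 1), (1, 3)] :=
          hparcs _ (by rw [arcsOf_cons₂, arcsOf_cons₂]
                       exact List.mem_cons_of_mem _ (List.mem_cons_self))
        have hp2 : p2 = 2 ∨ p2 = 3 := by
          fin_cases p2 <;> first | (left; rfl) | (right; rfl) | exact absurd h12 (by decide)
        rcases hp2 with hp2 | hp2
        · subst hp2
          match rest2, hpl, hpnd, hpH, hparcs with
          | [], hpl, _, _, _ => exact absurd hpl (by decide)
          | p3 :: rest3, hpl, hpnd, hpH, hparcs =>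
            have h23 : ((2 : Fin 4), p3) ∈ [((0 : Fin 4), 1), (1, 2), (2, 1), (1, 3)] :=
              hparcs _ (by
                rw [arcsOf_cons₂, arcsOf_cons₂, arcsOf_cons₂]
                exact List.mem_cons_of_mem _ (List.mem_cons_of_mem _ (List.mem_cons_self)))
            have hp3 : p3 = 1 := by fin_cases p3 <;> first | rfl | exact absurd h23 (by decide)
            subst hp3
            exact absurd hpnd (by simp)
        · subst hp2
          match rest2, hpl, hpnd, hpH, hparcs with
          | [], hpl, _, hpH, _ =>
            have hcl : colourList col [(0 : Fin 4), 1, 3] = [a, cc] := by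
              simp [colourList, hcol01, hcol13]
            rw [hcl] at hpH
            exact (List.isChain_cons_cons.1 hpH).1
          | p3 :: rest3, hpl, hpnd, hpH, hparcs =>
            have h33 : ((3 : Fin 4), p3) ∈ [((0 : Fin 4), 1), (1, 2), (2, 1), (1, 3)] :=
              hparcs _ (by
                rw [arcsOf_cons₂, arcsOf_cons₂, arcsOf_cons₂]
                exact List.mem_cons_of_mem _ (List.mem_cons_of_mem _ (List.mem_cons_self)))
            exact absurd h33 (by fin_cases p3 <;> decide)
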